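/- For permutations σ of m and τ of p, and any permutation ν occurring in the shifted shuffle of σ and τ, the length q of the saillance composition of ν satisfies ℓ(SC(τ)) ≤ q ≤ ℓ(SC(τ)) + ℓ(SC(σ)), and the first q − ℓ(SC(τ)) saillance positions of ν come from saillances of σ while the remaining ℓ(SC(τ)) come from the shifted saillances of τ. -/

import Mathlib

open scoped Classical

/-- A word is *initially dominated* if its first letter is strictly greater
than all subsequent letters. -/
def initiallyDominated (w : List ℕ) : Prop :=
  w ≠ [] ∧ ∀ a ∈ w.tail, a < w.head!

/-- Positions (0-indexed) of the left-to-right maxima of a word. -/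
def lrMaxPositions (w : List ℕ) : List ℕ :=
  (List.range w.length).filter (fun i => decide (∀ j < i, w[j]! < w[i]!))

/-- The saillance composition of a word: gaps between consecutive
left-to-right maxima positions. -/
def SC (w : List ℕ) : List ℕ :=
  List.zipWith (fun a b => a - b) ((lrMaxPositions w).tail ++ [w.length]) (lrMaxPositions w)

/-- The word (one-line notation, values in {1,…,n}) of a permutation of {1,…,n}. -/
def permWord {n : ℕ} (σ : Equiv.Perm (Fin n)) : List ℕ :=
  List.ofFn (fun i => (σ i : ℕ) + 1)

/-- `w` occurs in the shifted shuffle of `u` (a word on {1,…,p}) and `v`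
(whose letters get shifted by `p`): the subword of letters ≤ p is `u` and the
subword of letters > p is `v` shifted by `p`. -/
def shiftedShuffleMem (p : ℕ) (u v w : List ℕ) : Prop :=
  w.filter (fun x => decide (x ≤ p)) = u ∧
    w.filter (fun x => decide (p < x)) = v.map (· + p)

/-- The values of a word at its left-to-right maxima positions. -/
def lrMaxValues (w : List ℕ) : List ℕ := (lrMaxPositions w).map (fun i => w[i]!)

/-- For `ν` in the shifted shuffle of `σ ∈ S_m` and `τ ∈ S_p`, the length `q`
of `SC(ν)` satisfies `ℓ(SC(τ)) ≤ q ≤ ℓ(SC(τ)) + ℓ(SC(σ))`, and the saillances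
of `ν` are a prefix (of length `q − ℓ(SC(τ))`) of the saillances of `σ`
followed by all the shifted saillances of `τ`. -/

def lrv (c : ℕ) : List ℕ → List ℕ
  | [] => []
  | a :: t => if c < a then a :: lrv a t else lrv c t

def posGT (c : ℕ) (w : List ℕ) : List ℕ :=
  (List.range w.length).filter (fun i => decide ((∀ j < i, w[j]! < w[i]!) ∧ c < w[i]!))

lemma posGT_cons (c b : ℕ) (t : List ℕ) :
    posGT c (b :: t) = (if c < b then [0] else []) ++ (posGT (max c b) t).map (· + 1) := by
  rw [posGT, List.length_cons, List.range_succ_eq_map, List.filter_cons]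
  have h2 : (List.map Nat.succ (List.range t.length)).filter
        (fun i => decide ((∀ j < i, (b::t)[j]! < (b::t)[i]!) ∧ c < (b::t)[i]!))
      = ((List.range t.length).filter
          (fun i => decide ((∀ j < i, t[j]! < t[i]!) ∧ max c b < t[i]!))).map Nat.succ := by
    rw [List.filter_map]
    congr 1
    apply List.filter_congr
    intro i _
    simp only [Function.comp, decide_eq_decide]
    constructor
    · rintro ⟨h, hc⟩
      refine ⟨fun j hj => by simpa using h (j+1) (by omega), ?_⟩
      exact max_lt_iff.mpr ⟨by simpa using hc, by simpa using h 0 (by omega)⟩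
    · rintro ⟨h, hm⟩
      refine ⟨fun j hj => ?_, by simpa using (max_lt_iff.mp hm).1⟩
      match j with
      | 0 => simpa using (max_lt_iff.mp hm).2
      | j+1 => exact (by simpa using h j (by omega))
  rw [h2]
  have h3 : ((List.range t.length).filter
          (fun i => decide ((∀ j < i, t[j]! < t[i]!) ∧ max c b < t[i]!))).map Nat.succ
      = (posGT (max c b) t).map (· + 1) := rfl
  rw [h3]
  by_cases hcb : c < b
  · rw [if_pos (decide_eq_true (show (∀ j < 0, (b::t)[j]! < (b::t)[0]!) ∧ c < (b::t)[0]!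
      from ⟨fun j hj => absurd hj (Nat.not_lt_zero j), hcb⟩)), if_pos hcb]
    rfl
  · rw [if_neg (fun hT => hcb (of_decide_eq_true hT).2), if_neg hcb]
    rfl

lemma posGT_eq (c : ℕ) (w : List ℕ) : (posGT c w).map (fun i => w[i]!) = lrv c w := by
  induction w generalizing c with
  | nil => simp [posGT, lrv]
  | cons b t ih =>
    rw [posGT_cons]
    have key : ∀ d : ℕ, ((posGT d t).map (· + 1)).map (fun i => (b::t)[i]!) = lrv d t := by
      intro d
      rw [List.map_map, ← ih d]
      exact List.map_congr_left (fun x _ => rfl)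
    by_cases hcb : c < b
    · simp only [hcb, if_true, List.singleton_append, List.map_cons, lrv,
        max_eq_right hcb.le]
      rw [show ((b::t)[0]!) = b from rfl, key b]
    · simp only [hcb, if_false, List.nil_append, lrv, max_eq_left (not_lt.mp hcb)]
      exact key c

lemma lrMaxPositions_cons (a : ℕ) (t : List ℕ) :
    lrMaxPositions (a :: t) = 0 :: (posGT a t).map (· + 1) := by
  rw [lrMaxPositions, List.length_cons, List.range_succ_eq_map, List.filter_cons]
  rw [if_pos (decide_eq_true (fun j hj => absurd hj (Nat.not_lt_zero j)))]
  congr 1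
  rw [List.filter_map]
  have : ((List.range t.length).filter
      ((fun i => decide (∀ j < i, (a::t)[j]! < (a::t)[i]!)) ∘ Nat.succ))
      = ((List.range t.length).filter
        (fun i => decide ((∀ j < i, t[j]! < t[i]!) ∧ a < t[i]!))) := by
    apply List.filter_congr
    intro i _
    simp only [Function.comp, decide_eq_decide]
    constructor
    · intro h
      exact ⟨fun j hj => by simpa using h (j+1) (by omega), by simpa using h 0 (by omega)⟩
    · rintro ⟨h, hc⟩ j hj
      match j with
      | 0 => simpa using hc
      | j+1 => exact (by simpa using h j (by omega))
  rw [this]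
  rfl

lemma lrMaxValues_eq_lrv (w : List ℕ) (hw : ∀ a ∈ w, 1 ≤ a) :
    lrMaxValues w = lrv 0 w := by
  cases w with
  | nil => simp [lrMaxValues, lrMaxPositions, lrv]
  | cons a t =>
    have ha : 0 < a := hw a (by simp)
    rw [lrMaxValues, lrMaxPositions_cons]
    simp only [List.map_cons, List.map_map, lrv, ha, if_true]
    congr 1
    rw [← posGT_eq a t]
    exact List.map_congr_left (fun x _ => rfl)


lemma lrv_big (m : ℕ) (w : List ℕ) : ∀ c, m ≤ c →
    lrv c w = lrv c (w.filter (fun x => decide (m < x))) := by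
  induction w with
  | nil => simp
  | cons a t ih =>
    intro c hc
    by_cases ha : m < a
    · rw [List.filter_cons_of_pos (by simpa using ha)]
      by_cases hca : c < a
      · simp only [lrv, hca, if_true]
        exact congrArg _ (ih a (by omega))
      · simp only [lrv, hca, if_false]
        exact ih c hc
    · rw [List.filter_cons_of_neg (by simpa using ha)]
      have : ¬ c < a := by omega
      simp only [lrv, this, if_false]
      exact ih c hc

lemma lrv_shift (m : ℕ) (v : List ℕ) : ∀ x,
    lrv (x + m) (v.map (· + m)) = (lrv x v).map (· + m) := by
  induction v with
  | nil => simp [lrv]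
  | cons a t ih =>
    intro x
    by_cases h : x < a
    · simp only [List.map_cons, lrv, if_pos (show x + m < a + m by omega), if_pos h]
      exact congrArg _ (ih a)
    · simp only [List.map_cons, lrv, if_neg (show ¬ (x + m < a + m) by omega), if_neg h]
      exact ih x

lemma lrv_shuffle (m : ℕ) (w : List ℕ) : ∀ (u v : List ℕ) (c : ℕ), c ≤ m →
    (∀ x ∈ v, 1 ≤ x) →
    w.filter (fun x => decide (x ≤ m)) = u →
    w.filter (fun x => decide (m < x)) = v.map (· + m) →
    ∃ t, lrv c w = (lrv c u).take t ++ (lrv 0 v).map (· + m) := by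
  induction w with
  | nil =>
    intro u v c _ _ hu hv
    have hu' : u = [] := hu.symm
    have hv' : v = [] := by
      cases v with
      | nil => rfl
      | cons a t => simp at hv
    subst hu' ; subst hv'
    exact ⟨0, by simp [lrv]⟩
  | cons a w' ih =>
    intro u v c hc hv1 hu hv
    by_cases ham : a ≤ m
    · -- small letter
      rw [List.filter_cons_of_pos (by simpa using ham)] at hu
      rw [List.filter_cons_of_neg (by simpa using (show ¬ m < a by omega))] at hv
      subst hu
      by_cases hca : c < a
      · obtain ⟨t, ht⟩ := ih (w'.filter (fun x => decide (x ≤ m))) v a ham hv1 rfl hv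
        refine ⟨t + 1, ?_⟩
        simp only [lrv, hca, if_true, ht, List.take_succ_cons, List.cons_append]
      · obtain ⟨t, ht⟩ := ih (w'.filter (fun x => decide (x ≤ m))) v c hc hv1 rfl hv
        refine ⟨t, ?_⟩
        simp only [lrv, hca, if_false, ht]
    · -- big letter
      have ham' : m < a := by omega
      rw [List.filter_cons_of_pos (by simpa using ham')] at hv
      obtain ⟨x, v', rfl⟩ : ∃ x v', v = x :: v' := by
        cases v with
        | nil => simp at hv
        | cons x v' => exact ⟨x, v', rfl⟩
      rw [List.map_cons] at hv
      injection hv with hax hv2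
      have hx1 : 1 ≤ x := hv1 x (by simp)
      have hca : c < a := by omega
      refine ⟨0, ?_⟩
      simp only [lrv, hca, if_true, List.take_zero, List.nil_append,
        if_pos (show (0:ℕ) < x by omega), List.map_cons]
      rw [hax] at *
      rw [lrv_big m w' (x + m) (by omega), hv2, lrv_shift]

lemma SC_length (w : List ℕ) : (SC w).length = (lrMaxValues w).length := by
  rw [SC, List.length_zipWith, lrMaxValues, List.length_map, List.length_append,
    List.length_tail, List.length_singleton]
  omega

lemma permWord_pos {n : ℕ} (σ : Equiv.Perm (Fin n)) : ∀ a ∈ permWord σ, 1 ≤ a := by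
  intro a ha
  rw [permWord, List.mem_ofFn] at ha
  obtain ⟨i, rfl⟩ := ha
  simp

theorem stmt18 (m p : ℕ) (σ : Equiv.Perm (Fin m)) (τ : Equiv.Perm (Fin p))
    (ν : Equiv.Perm (Fin (m + p)))
    (hν : shiftedShuffleMem m (permWord σ) (permWord τ) (permWord ν)) :
    (SC (permWord τ)).length ≤ (SC (permWord ν)).length ∧
      (SC (permWord ν)).length ≤ (SC (permWord τ)).length + (SC (permWord σ)).length ∧
      lrMaxValues (permWord ν)
        = (lrMaxValues (permWord σ)).take
            ((SC (permWord ν)).length - (SC (permWord τ)).length)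
          ++ (lrMaxValues (permWord τ)).map (· + m) := by
  obtain ⟨hu, hv⟩ := hν
  obtain ⟨t, ht⟩ := lrv_shuffle m (permWord ν) (permWord σ) (permWord τ) 0
    (Nat.zero_le m) (permWord_pos τ) hu hv
  have hb : lrMaxValues (permWord ν)
      = (lrMaxValues (permWord σ)).take t ++ (lrMaxValues (permWord τ)).map (· + m) := by
    rw [lrMaxValues_eq_lrv _ (permWord_pos ν), lrMaxValues_eq_lrv _ (permWord_pos σ),
      lrMaxValues_eq_lrv _ (permWord_pos τ), ht]
  set A := lrMaxValues (permWord σ) with hA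
  set B := lrMaxValues (permWord τ) with hB
  have hq : (SC (permWord ν)).length = min t A.length + B.length := by
    rw [SC_length, hb, List.length_append, List.length_take, List.length_map]
  have hqa : (SC (permWord σ)).length = A.length := SC_length _
  have hqb : (SC (permWord τ)).length = B.length := SC_length _
  refine ⟨by omega, by omega, ?_⟩
  rw [hb]
  congr 1
  rw [List.take_eq_take_iff]
  omega
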